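/- arXiv:1904.10850 — 2 statements merged into one kernel-verified Lean document; each statement's English description precedes it below -/
import Mathlib

section
/- For every natural number r, the union of the disc of radius r centered at (0,0) and the disc of radius r centered at (1,0) is a nest: it has cardinality 2(r+1)^2 and span 2r+1, and every finite set of cells of cardinality 2(r+1)^2 has span at least 2r+1. -/
/-- Manhattan distance between two cells of the integer grid. -/
def mdist (p q : ℤ × ℤ) : ℕ := (p.1 - q.1).natAbs + (p.2 - q.2).natAbs

/-- The disc of radius `r` centered at `c`: all cells at Manhattan distance at most `r`. -/
noncomputable def disc (r : ℕ) (c : ℤ × ℤ) : Finset (ℤ × ℤ) :=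
  (Finset.Icc (c.1 - r, c.2 - r) (c.1 + r, c.2 + r)).filter (fun p => mdist p c ≤ r)

/-- The span of a finite set of cells: the maximum Manhattan distance between two of
its cells (`0` if the set has at most one cell). -/
def span (S : Finset (ℤ × ℤ)) : ℕ := (S ×ˢ S).sup fun pq => mdist pq.1 pq.2

lemma mem_disc {r : ℕ} {c p : ℤ × ℤ} : p ∈ disc r c ↔ mdist p c ≤ r := by
  rw [disc, Finset.mem_filter]
  simp only [Finset.mem_Icc, Prod.le_def, mdist]
  constructor
  · exact fun h => h.2
  · intro h
    exact ⟨⟨⟨by omega, by omega⟩, by omega, by omega⟩, h⟩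

lemma mem_U {r : ℕ} {p : ℤ × ℤ} :
    p ∈ disc r (0, 0) ∪ disc r (1, 0) ↔
      p.1.natAbs + p.2.natAbs ≤ r ∨ (p.1 - 1).natAbs + p.2.natAbs ≤ r := by
  simp [Finset.mem_union, mem_disc, mdist]

lemma card_U (r : ℕ) : (disc r (0, 0) ∪ disc r (1, 0)).card = 2 * (r + 1) ^ 2 := by
  have h : (disc r (0, 0) ∪ disc r (1, 0)).card
      = (Finset.Icc (-(r:ℤ)) (r + 1) ×ˢ Finset.Icc (0:ℤ) r).card := by
    refine Finset.card_nbij' (i := fun p => (p.1 + p.2, (p.1 - p.2 + (r:ℤ)) / 2))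
      (j := fun q => ((q.1 + (2 * q.2 - (r:ℤ) + (q.1 + (r:ℤ)) % 2)) / 2,
                 (q.1 - (2 * q.2 - (r:ℤ) + (q.1 + (r:ℤ)) % 2)) / 2)) ?_ ?_ ?_ ?_
    · intro p hp
      rw [Finset.mem_coe, mem_U] at hp
      simp only [Finset.mem_coe, Finset.mem_product, Finset.mem_Icc]
      omega
    · intro q hq
      simp only [Finset.mem_coe, Finset.mem_product, Finset.mem_Icc] at hq
      simp only [Finset.mem_coe, mem_U]
      omega
    · intro p hp
      rw [Finset.mem_coe, mem_U] at hp
      simp only [Prod.ext_iff]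
      constructor <;> omega
    · intro q hq
      simp only [Finset.mem_coe, Finset.mem_product, Finset.mem_Icc] at hq
      simp only [Prod.ext_iff]
      constructor <;> omega
  rw [h, Finset.card_product, Int.card_Icc, Int.card_Icc]
  have : ((r:ℤ) + 1 + 1 - -(r:ℤ)).toNat = 2 * r + 2 := by omega
  have h2 : ((r:ℤ) + 1 - 0).toNat = r + 1 := by omega
  rw [this, h2]; ring

lemma span_U (r : ℕ) : span (disc r (0, 0) ∪ disc r (1, 0)) = 2 * r + 1 := by
  apply le_antisymm
  · apply Finset.sup_le
    intro pq hpq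
    rw [Finset.mem_product] at hpq
    have h1 := mem_U.mp hpq.1
    have h2 := mem_U.mp hpq.2
    simp only [mdist]
    omega
  · have hmem : ((-(r:ℤ), (0:ℤ)), ((r:ℤ) + 1, (0:ℤ))) ∈
        (disc r (0, 0) ∪ disc r (1, 0)) ×ˢ (disc r (0, 0) ∪ disc r (1, 0)) := by
      rw [Finset.mem_product, mem_U, mem_U]
      constructor <;> [left; right] <;> simp
    have := Finset.le_sup (f := fun pq : (ℤ × ℤ) × (ℤ × ℤ) => mdist pq.1 pq.2) hmem
    have heq : mdist (-(r:ℤ), (0:ℤ)) ((r:ℤ) + 1, (0:ℤ)) = 2 * r + 1 := by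
      simp only [mdist]; omega
    unfold span
    exact heq.symm.trans_le this

lemma lower (r : ℕ) (S : Finset (ℤ × ℤ)) (hS : S.card = 2 * (r + 1) ^ 2) :
    2 * r + 1 ≤ span S := by
  by_contra hcon
  push_neg at hcon

  unfold span at hcon
  have hd : ∀ p ∈ S, ∀ q ∈ S, mdist p q ≤ 2 * r := by
    intro p hp q hq
    have hm : (p, q) ∈ S ×ˢ S := Finset.mem_product.mpr ⟨hp, hq⟩
    have := Finset.le_sup (f := fun pq : (ℤ × ℤ) × (ℤ × ℤ) => mdist pq.1 pq.2) hm
    simp only at this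
    omega
  set f : ℤ × ℤ → ℤ × ℤ := fun p => (p.1 + p.2, p.1 - p.2) with hf
  set T := S.image f with hT
  have hinj : Function.Injective f := by
    intro p q h
    simp only [hf, Prod.mk.injEq] at h
    have : p = (p.1, p.2) := rfl
    rw [this]
    have : q = (q.1, q.2) := rfl
    rw [this]
    simp only [Prod.mk.injEq]
    omega
  have hTcard : T.card = S.card := Finset.card_image_of_injective S hinj
  have hSne : S.Nonempty := by
    rw [← Finset.card_pos, hS]; positivity
  have hTne : T.Nonempty := hSne.image f
  obtain ⟨pa, hpa, hamin⟩ := T.exists_min_image Prod.fst hTne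
  obtain ⟨pb, hpb, hbmin⟩ := T.exists_min_image Prod.snd hTne
  have hbound : ∀ q ∈ T, ∀ q' ∈ T,
      (q.1 - q'.1).natAbs ≤ 2 * r ∧ (q.2 - q'.2).natAbs ≤ 2 * r := by
    intro q hq q' hq'
    obtain ⟨p, hp, rfl⟩ := Finset.mem_image.mp hq
    obtain ⟨p', hp', rfl⟩ := Finset.mem_image.mp hq'
    have := hd p hp p' hp'
    simp only [mdist] at this
    simp only [hf]
    omega
  have hpar : ∀ q ∈ T, (q.1 + q.2) % 2 = 0 := by
    intro q hq
    obtain ⟨p, hp, rfl⟩ := Finset.mem_image.mp hq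
    simp only [hf]
    omega
  have hcard : T.card ≤ ((Finset.Icc pa.1 (pa.1 + 2 * r)) ×ˢ (Finset.Icc (0:ℤ) r)).card := by
    apply Finset.card_le_card_of_injOn (fun q => (q.1, (q.2 - pb.2) / 2))
    · intro q hq
      simp only [Finset.mem_coe, Finset.mem_product, Finset.mem_Icc]
      have h1 := hamin q hq
      have h2 := hbmin q hq
      have h3 := (hbound q hq pa hpa).1
      have h4 := (hbound q hq pb hpb).2
      omega
    · intro q hq q' hq' h
      simp only [Prod.mk.injEq] at h
      have h1 := hpar q hq
      have h2 := hpar q' hq'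
      have : q = (q.1, q.2) := rfl
      rw [this]
      have : q' = (q'.1, q'.2) := rfl
      rw [this]
      simp only [Prod.mk.injEq]
      omega
  rw [Finset.card_product, Int.card_Icc, Int.card_Icc] at hcard
  have e1 : ((pa.1 + 2 * r + 1 - pa.1)).toNat = 2 * r + 1 := by omega
  have e2 : ((r:ℤ) + 1 - 0).toNat = r + 1 := by omega
  rw [e1, e2, hTcard, hS] at hcard
  nlinarith

/-- The union of the discs of radius `r` centered at `(0,0)` and `(1,0)` is a nest:
it has `2(r+1)²` cells and span `2r + 1`, and every finite set of `2(r+1)²` cells has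
span at least `2r + 1`. -/
theorem disc_union_is_nest (r : ℕ) :
    (disc r (0, 0) ∪ disc r (1, 0)).card = 2 * (r + 1) ^ 2 ∧
    span (disc r (0, 0) ∪ disc r (1, 0)) = 2 * r + 1 ∧
    (∀ S : Finset (ℤ × ℤ), S.card = 2 * (r + 1) ^ 2 → 2 * r + 1 ≤ span S) := by
  exact ⟨card_U r, span_U r, lower r⟩
end

section
/- For every positive integer z, the minimum possible span of a set of z cells of the integer grid equals ceil(sqrt(2z-1)) - 1; equivalently, it equals the least natural number s such that (s+1)^2 >= 2z - 1. -/
lemma mdist_le_span {S : Finset (ℤ×ℤ)} {p q : ℤ×ℤ} (hp : p ∈ S) (hq : q ∈ S) :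
    mdist p q ≤ span S := by
  have : (p, q) ∈ S ×ˢ S := Finset.mem_product.2 ⟨hp, hq⟩
  exact Finset.le_sup (f := fun pq => mdist pq.1 pq.2) this

lemma span_mono {S T : Finset (ℤ×ℤ)} (h : S ⊆ T) : span S ≤ span T :=
  Finset.sup_mono (Finset.product_subset_product h h)

lemma card_even_range (n : ℕ) :
    ((Finset.range n).filter (fun x => x % 2 = 0)).card = (n+1)/2 := by
  induction n with
  | zero => simp
  | succ n ih =>
    rw [Finset.range_add_one, Finset.filter_insert]
    by_cases h : n % 2 = 0 <;> simp [h, Finset.card_insert_of_notMem, ih] <;> omega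

lemma card_odd_range (n : ℕ) :
    ((Finset.range n).filter (fun x => x % 2 = 1)).card = n/2 := by
  induction n with
  | zero => simp
  | succ n ih =>
    rw [Finset.range_add_one, Finset.filter_insert]
    by_cases h : n % 2 = 1 <;> simp [h, Finset.card_insert_of_notMem, ih] <;> omega

lemma card_evenbox (n : ℕ) :
    (((Finset.range n) ×ˢ (Finset.range n)).filter
      (fun q => (q.1 + q.2) % 2 = 0)).card = ((n+1)/2)^2 + (n/2)^2 := by
  have hsplit : ((Finset.range n) ×ˢ (Finset.range n)).filter
      (fun q => (q.1 + q.2) % 2 = 0)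
      = ((Finset.range n).filter (fun x => x % 2 = 0)) ×ˢ
          ((Finset.range n).filter (fun x => x % 2 = 0)) ∪
        ((Finset.range n).filter (fun x => x % 2 = 1)) ×ˢ
          ((Finset.range n).filter (fun x => x % 2 = 1)) := by
    ext ⟨u, v⟩
    simp only [Finset.mem_filter, Finset.mem_product, Finset.mem_union, Finset.mem_range]
    omega
  have hdisj : Disjoint
      (((Finset.range n).filter (fun x => x % 2 = 0)) ×ˢ
          ((Finset.range n).filter (fun x => x % 2 = 0)))
      (((Finset.range n).filter (fun x => x % 2 = 1)) ×ˢ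
          ((Finset.range n).filter (fun x => x % 2 = 1))) := by
    rw [Finset.disjoint_left]
    rintro ⟨u, v⟩ h1 h2
    simp only [Finset.mem_filter, Finset.mem_product, Finset.mem_range] at h1 h2
    omega
  rw [hsplit, Finset.card_union_of_disjoint hdisj, Finset.card_product,
    Finset.card_product, card_even_range, card_odd_range]
  ring

lemma exists_small_span (z n : ℕ) (h : 2*z ≤ n^2 + 1) :
    ∃ S : Finset (ℤ×ℤ), S.card = z ∧ span S ≤ n - 1 := by
  have hG := card_evenbox n
  set G := ((Finset.range n) ×ˢ (Finset.range n)).filter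
      (fun q => (q.1 + q.2) % 2 = 0) with hGdef
  set W := G.image (fun q : ℕ×ℕ => (((q.1:ℤ)+q.2)/2, ((q.1:ℤ)-q.2)/2)) with hWdef
  have hinj : Set.InjOn (fun q : ℕ×ℕ => (((q.1:ℤ)+q.2)/2, ((q.1:ℤ)-q.2)/2)) G := by
    rintro ⟨u, v⟩ h1 ⟨u', v'⟩ h2 heq
    simp only [hGdef, Finset.mem_coe, Finset.mem_filter, Finset.mem_product,
      Finset.mem_range] at h1 h2
    simp only [Prod.mk.injEq, Prod.ext_iff] at heq ⊢
    omega
  have hWcard : W.card = ((n+1)/2)^2 + (n/2)^2 := by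
    rw [hWdef, Finset.card_image_of_injOn hinj, hG]
  have hzW : z ≤ W.card := by
    rw [hWcard]
    obtain ⟨q, rfl | rfl⟩ := Nat.even_or_odd' n
    · have e1 : (2*q+1)/2 = q := by omega
      have e2 : 2*q/2 = q := by omega
      rw [e1, e2]; nlinarith
    · have e1 : (2*q+1+1)/2 = q+1 := by omega
      have e2 : (2*q+1)/2 = q := by omega
      rw [e1, e2]; nlinarith
  obtain ⟨S, hsub, hcard⟩ := Finset.exists_subset_card_eq hzW
  refine ⟨S, hcard, le_trans (span_mono hsub) ?_⟩
  apply Finset.sup_le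
  rintro ⟨p, p'⟩ hmem
  rw [Finset.mem_product] at hmem
  obtain ⟨hp, hp'⟩ := hmem
  simp only [hWdef, Finset.mem_image] at hp hp'
  obtain ⟨⟨u, v⟩, hq, rfl⟩ := hp
  obtain ⟨⟨u', v'⟩, hq', rfl⟩ := hp'
  simp only [hGdef, Finset.mem_filter, Finset.mem_product, Finset.mem_range] at hq hq'
  simp only [mdist]
  omega

lemma key_lower (S : Finset (ℤ×ℤ)) (hS : S.Nonempty) :
    2 * S.card ≤ (span S + 1)^2 + 1 := by
  set s := span S with hs
  set φ : ℤ×ℤ → ℤ×ℤ := fun p => (p.1+p.2, p.1-p.2) with hφ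
  have hφinj : Function.Injective φ := by
    rintro ⟨x, y⟩ ⟨x', y'⟩ h
    simp only [hφ, Prod.mk.injEq] at h
    simp only [Prod.mk.injEq]
    omega
  set T := S.image φ with hT
  have hTcard : T.card = S.card := Finset.card_image_of_injective _ hφinj
  have hT' : T.Nonempty := hS.image φ
  set a := T.inf' hT' Prod.fst with ha
  set b := T.inf' hT' Prod.snd with hb
  have hdiff : ∀ q ∈ T, ∀ q' ∈ T, q.1 - q'.1 ≤ s ∧ q.2 - q'.2 ≤ s := by
    rintro q hq q' hq'
    simp only [hT, Finset.mem_image] at hq hq'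
    obtain ⟨p, hp, rfl⟩ := hq
    obtain ⟨p', hp', rfl⟩ := hq'
    have := mdist_le_span hp hp'
    simp only [mdist] at this
    simp only [hφ]
    omega
  have hmem : ∀ q ∈ T, a ≤ q.1 ∧ q.1 ≤ a + s ∧ b ≤ q.2 ∧ q.2 ≤ b + s := by
    intro q hq
    obtain ⟨q₀, hq₀, hq₀a⟩ := Finset.exists_mem_eq_inf' hT' Prod.fst
    obtain ⟨q₁, hq₁, hq₁b⟩ := Finset.exists_mem_eq_inf' hT' Prod.snd
    have h1 := Finset.inf'_le (f := Prod.fst) hq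
    have h2 := Finset.inf'_le (f := Prod.snd) hq
    have h3 := (hdiff q hq q₀ hq₀).1
    have h4 := (hdiff q hq q₁ hq₁).2
    rw [← ha] at h1
    rw [← hb] at h2
    omega
  have hpar : ∀ q ∈ T, (q.1 + q.2) % 2 = 0 := by
    intro q hq
    simp only [hT, Finset.mem_image] at hq
    obtain ⟨p, hp, rfl⟩ := hq
    simp only [hφ]
    omega
  set c : ℤ×ℤ := (a+s, b+s) with hc
  set D := T.erase c with hD
  set ψ : ℤ×ℤ → ℤ×ℤ := fun q =>
    if q.2 < b + s then (q.1, q.2+1)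
    else if s % 2 = 1 then (q.1, b) else (q.1+1, b) with hψ
  have hDsub : D ⊆ T := Finset.erase_subset _ _
  have hinjD : Set.InjOn ψ D := by
    rintro q hq q' hq' heq
    have hq2 := hmem q (hDsub hq)
    have hq'2 := hmem q' (hDsub hq')
    simp only [hψ] at heq
    split_ifs at heq <;>
      (simp only [Prod.mk.injEq] at heq; apply Prod.ext <;> omega)
  set V := D.image ψ with hV
  have hVcard : V.card = D.card := Finset.card_image_of_injOn hinjD
  have hVodd : ∀ x ∈ V, (x.1 + x.2) % 2 = 1 := by
    intro x hx
    simp only [hV, Finset.mem_image] at hx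
    obtain ⟨q, hq, rfl⟩ := hx
    have hqT := hDsub hq
    have hb2 := (hmem q hqT).2.2.2
    have hpq := hpar q hqT
    simp only [hψ]
    split_ifs <;> simp <;> omega
  have hdisj : Disjoint T V := by
    rw [Finset.disjoint_right]
    intro x hxV hxT
    have := hVodd x hxV
    have := hpar x hxT
    omega
  set B : Finset (ℤ×ℤ) := Finset.Icc a (a+s) ×ˢ Finset.Icc b (b+s) with hB
  have hBcard : B.card = (s+1) * (s+1) := by
    rw [hB, Finset.card_product, Int.card_Icc, Int.card_Icc]
    have h1 : (a + s + 1 - a).toNat = s + 1 := by omega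
    have h2 : (b + s + 1 - b).toNat = s + 1 := by omega
    rw [h1, h2]
  have hTB : T ⊆ B := by
    intro q hq
    have := hmem q hq
    simp only [hB, Finset.mem_product, Finset.mem_Icc]
    omega
  have hVB : V ⊆ B := by
    intro x hx
    simp only [hV, Finset.mem_image] at hx
    obtain ⟨q, hq, rfl⟩ := hx
    have hqb := hmem q (hDsub hq)
    have hqc : q ≠ c := Finset.ne_of_mem_erase hq
    have hqc' : q.1 ≠ a + s ∨ q.2 ≠ b + s := by
      by_contra h
      push_neg at h
      exact hqc (Prod.ext h.1 h.2)
    simp only [hB, Finset.mem_product, Finset.mem_Icc, hψ]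
    split_ifs <;> simp <;> omega
  have hunion : (T ∪ V).card ≤ B.card :=
    Finset.card_le_card (Finset.union_subset hTB hVB)
  rw [Finset.card_union_of_disjoint hdisj, hBcard] at hunion
  have hD1 : T.card - 1 ≤ D.card := Finset.pred_card_le_card_erase
  have hT1 : 1 ≤ T.card := Finset.card_pos.2 hT'
  have hsq : (s+1)^2 = (s+1)*(s+1) := by ring
  omega

/-- For every positive `z`, the minimum possible span of a set of `z` cells equals
`⌈√(2z-1)⌉ - 1`, which is the least natural number `s` with `(s+1)² ≥ 2z - 1`. -/
theorem min_span_of_card (z : ℕ) (hz : 0 < z) :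
    IsLeast {s : ℕ | ∃ S : Finset (ℤ × ℤ), S.card = z ∧ span S = s}
      (⌈Real.sqrt (2 * z - 1)⌉₊ - 1) ∧
    ⌈Real.sqrt (2 * z - 1)⌉₊ - 1 = sInf {s : ℕ | 2 * z - 1 ≤ (s + 1) ^ 2} := by
  have hx : ((2 * z - 1 : ℕ) : ℝ) = 2 * (z:ℝ) - 1 := by
    have h1 : (1:ℕ) ≤ 2 * z := by omega
    push_cast [h1]
    ring
  have hxpos : (0:ℝ) < 2 * (z:ℝ) - 1 := by
    rw [← hx]
    exact_mod_cast Nat.pos_of_ne_zero (by omega)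
  have hm1 : 1 ≤ ⌈Real.sqrt (2 * (z:ℝ) - 1)⌉₊ :=
    Nat.one_le_ceil_iff.2 (Real.sqrt_pos.2 hxpos)
  set m := ⌈Real.sqrt (2 * (z:ℝ) - 1)⌉₊ with hmdef
  have hmem2 : (2 * z - 1 : ℕ) ≤ m^2 := by
    have h := Nat.le_ceil (Real.sqrt (2 * (z:ℝ) - 1))
    have h2 : (2 * (z:ℝ) - 1) ≤ (m : ℝ)^2 := by
      have := Real.sq_sqrt hxpos.le
      nlinarith [Real.sqrt_nonneg (2 * (z:ℝ) - 1)]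
    rw [← hx] at h2
    exact_mod_cast h2
  have hlb : ∀ k : ℕ, (2*z-1:ℕ) ≤ (k+1)^2 → m - 1 ≤ k := by
    intro k hk
    by_contra hcon
    push_neg at hcon
    have hk1 : k + 1 < m := by omega
    have hlt := Nat.lt_ceil.1 hk1
    push_cast at hlt
    have h2 : ((k:ℝ) + 1)^2 < 2 * (z:ℝ) - 1 := (Real.lt_sqrt (by positivity)).1 hlt
    rw [← hx] at h2
    have h3 : (((k+1)^2 : ℕ) : ℝ) < ((2*z-1:ℕ):ℝ) := by push_cast; linarith
    have := Nat.cast_lt (α := ℝ) |>.1 h3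
    omega
  -- existence of a set with card z and small span
  have hle : 2 * z ≤ m^2 + 1 := by omega
  obtain ⟨S, hScard, hSspan⟩ := exists_small_span z m hle
  have hklow : ∀ (S' : Finset (ℤ×ℤ)), S'.card = z → m - 1 ≤ span S' := by
    intro S' hc
    have h := key_lower S' (Finset.card_pos.1 (by omega))
    rw [hc] at h
    apply hlb
    omega
  have hspanS : span S = m - 1 := le_antisymm hSspan (hklow S hScard)
  have hmemset : m - 1 ∈ {s : ℕ | 2 * z - 1 ≤ (s + 1) ^ 2} := by
    have he : m - 1 + 1 = m := by omega
    simp only [Set.mem_setOf_eq, he]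
    exact hmem2
  refine ⟨⟨⟨S, hScard, hspanS⟩, ?_⟩, ?_⟩
  · rintro t ⟨S', hc, rfl⟩
    exact hklow S' hc
  · apply le_antisymm
    · have hmm := Nat.sInf_mem (⟨m - 1, hmemset⟩ :
        {s : ℕ | 2 * z - 1 ≤ (s + 1) ^ 2}.Nonempty)
      exact hlb _ hmm
    · exact Nat.sInf_le hmemset
end
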